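/- Let g be a 3-step nilpotent Lie algebra with dim_ℝ [g,g] = 2. Then for every integrable complex structure J on g, the commutator subalgebra [g,g] is not J-invariant; consequently J is abelian and each term of the ascending central series is J-invariant. -/

import Mathlib

/-- If `J ∘ J = -1` and `v ≠ 0` then `v, J v` are linearly independent. -/
lemma aux_pair_indep {g : Type*} [AddCommGroup g] [Module ℝ g] (J : g →ₗ[ℝ] g)
    (hJJ : ∀ v, J (J v) = -v) {v : g} (hv : v ≠ 0) : LinearIndependent ℝ ![v, J v] := by
  rw [LinearIndependent.pair_iff]
  intro s t h
  have h2 : s • J v - t • v = 0 := by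
    have h' := congrArg J h
    simp only [map_add, map_smul, hJJ, map_zero, smul_neg] at h'
    simpa [sub_eq_add_neg] using h'
  have key : (s * s + t * t) • v = 0 := by
    have e : (s * s + t * t) • v = s • (s • v + t • J v) - t • (s • J v - t • v) := by module
    rw [e, h, h2, smul_zero, smul_zero, sub_zero]
  rcases smul_eq_zero.mp key with h0 | h0
  · constructor <;> nlinarith [sq_nonneg s, sq_nonneg t]
  · exact absurd h0 hv

/-- For a 3-step nilpotent Lie algebra with 2-dimensional commutator subalgebra and any
integrable complex structure `J`: the commutator subalgebra is not `J`-invariant, `J` is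
abelian, and every term of the ascending central series is `J`-invariant. -/
theorem stmt_18 (g : Type*) [LieRing g] [LieAlgebra ℝ g] [Module.Finite ℝ g]
    (h3 : LieModule.lowerCentralSeries ℝ g g 3 = ⊥)
    (h3' : LieModule.lowerCentralSeries ℝ g g 2 ≠ ⊥)
    (hdim : Module.finrank ℝ (LieModule.lowerCentralSeries ℝ g g 1 : Submodule ℝ g) = 2)
    (J : g →ₗ[ℝ] g) (hJ : J ∘ₗ J = -LinearMap.id)
    (hint : ∀ x y : g, ⁅x, y⁆ - ⁅J x, J y⁆ + J ⁅J x, y⁆ + J ⁅x, J y⁆ = 0) :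
    ¬ (∀ c ∈ LieModule.lowerCentralSeries ℝ g g 1, J c ∈ LieModule.lowerCentralSeries ℝ g g 1) ∧
    (∀ x y : g, ⁅x, y⁆ = ⁅J x, J y⁆) ∧
    ∀ i : ℕ, ∀ x ∈ (⊥ : LieSubmodule ℝ g g).ucs i, J x ∈ (⊥ : LieSubmodule ℝ g g).ucs i := by
  have hJJ : ∀ v : g, J (J v) = -v := by
    intro v
    have := LinearMap.congr_fun hJ v
    simpa using this
  have e1 : LieModule.lowerCentralSeries ℝ g g 1
      = ⁅(⊤ : LieIdeal ℝ g), LieModule.lowerCentralSeries ℝ g g 0⁆ :=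
    LieModule.lowerCentralSeries_succ ℝ g g 0
  have e2 : LieModule.lowerCentralSeries ℝ g g 2
      = ⁅(⊤ : LieIdeal ℝ g), LieModule.lowerCentralSeries ℝ g g 1⁆ :=
    LieModule.lowerCentralSeries_succ ℝ g g 1
  have e3 : LieModule.lowerCentralSeries ℝ g g 3
      = ⁅(⊤ : LieIdeal ℝ g), LieModule.lowerCentralSeries ℝ g g 2⁆ :=
    LieModule.lowerCentralSeries_succ ℝ g g 2
  -- membership facts
  have hmem1 : ∀ x y : g, ⁅x, y⁆ ∈ LieModule.lowerCentralSeries ℝ g g 1 := by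
    intro x y
    rw [e1]
    exact LieSubmodule.lie_mem_lie (LieSubmodule.mem_top x) (LieSubmodule.mem_top y)
  have hmem2 : ∀ {x : g}, x ∈ LieModule.lowerCentralSeries ℝ g g 1 → ∀ y : g,
      ⁅y, x⁆ ∈ LieModule.lowerCentralSeries ℝ g g 2 := by
    intro x hx y
    rw [e2]
    exact LieSubmodule.lie_mem_lie (LieSubmodule.mem_top y) hx
  have hcent : ∀ {x : g}, x ∈ LieModule.lowerCentralSeries ℝ g g 2 → ∀ y : g, ⁅y, x⁆ = 0 := by
    intro x hx y
    have h : ⁅y, x⁆ ∈ LieModule.lowerCentralSeries ℝ g g 3 := by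
      rw [e3]
      exact LieSubmodule.lie_mem_lie (LieSubmodule.mem_top y) hx
    rw [h3] at h
    exact (LieSubmodule.mem_bot _).mp h
  have hle : LieModule.lowerCentralSeries ℝ g g 2 ≤ LieModule.lowerCentralSeries ℝ g g 1 :=
    LieModule.antitone_lowerCentralSeries ℝ g g (by norm_num)
  have hne : LieModule.lowerCentralSeries ℝ g g 2 ≠ LieModule.lowerCentralSeries ℝ g g 1 := by
    intro h
    apply h3'
    rw [← h3, e3, h, ← e2]
    exact h.symm
  have hlt : (LieModule.lowerCentralSeries ℝ g g 2 : Submodule ℝ g)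
      < (LieModule.lowerCentralSeries ℝ g g 1 : Submodule ℝ g) := by
    refine lt_of_le_of_ne ?_ ?_
    · exact hle
    · intro h; exact hne (LieSubmodule.toSubmodule_injective h)
  have hL2ne : (LieModule.lowerCentralSeries ℝ g g 2 : Submodule ℝ g) ≠ ⊥ := by
    intro h
    exact h3' ((LieSubmodule.toSubmodule_eq_bot (N := _)).mp h)
  have hdim2 : Module.finrank ℝ (LieModule.lowerCentralSeries ℝ g g 2 : Submodule ℝ g) = 1 := by
    have h1 := Submodule.finrank_lt_finrank_of_lt hlt
    rw [hdim] at h1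
    have h0 : 0 < Module.finrank ℝ (LieModule.lowerCentralSeries ℝ g g 2 : Submodule ℝ g) :=
      Module.finrank_pos_iff.mpr (Submodule.nontrivial_iff_ne_bot.mpr hL2ne)
    omega
  -- pick z spanning the one-dimensional `lcs 2`
  obtain ⟨z, hz2, hz0⟩ : ∃ z, z ∈ LieModule.lowerCentralSeries ℝ g g 2 ∧ z ≠ 0 := by
    by_contra h
    push_neg at h
    exact h3' ((LieSubmodule.eq_bot_iff _).mpr fun m hm => h m hm)
  have hspan : (LieModule.lowerCentralSeries ℝ g g 2 : Submodule ℝ g) = Submodule.span ℝ {z} := by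
    refine (Submodule.eq_of_le_of_finrank_le ?_ ?_).symm
    · rwa [Submodule.span_singleton_le_iff_mem]
    · rw [hdim2, finrank_span_singleton hz0]
  have hmulz : ∀ {m : g}, m ∈ LieModule.lowerCentralSeries ℝ g g 2 → ∃ c : ℝ, m = c • z := by
    intro m hm
    have h : m ∈ Submodule.span ℝ {z} := hspan ▸ hm
    rcases Submodule.mem_span_singleton.mp h with ⟨c, hc⟩
    exact ⟨c, hc.symm⟩
  have hnsq : ∀ d : ℝ, J z ≠ d • z := by
    intro d hd
    have h1 : J (J z) = (d * d) • z := by rw [hd, map_smul, hd, smul_smul]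
    rw [hJJ] at h1
    have h2 : (d * d + 1) • z = 0 := by
      rw [add_smul, one_smul, ← h1]; abel
    rcases smul_eq_zero.mp h2 with h0 | h0
    · nlinarith [sq_nonneg d]
    · exact hz0 h0
  -- Claim 1: the commutator subalgebra is not J-invariant
  have claim1 : ¬ (∀ c ∈ LieModule.lowerCentralSeries ℝ g g 1,
      J c ∈ LieModule.lowerCentralSeries ℝ g g 1) := by
    intro H
    have hz1 : z ∈ LieModule.lowerCentralSeries ℝ g g 1 := hle hz2
    have hJz1 : J z ∈ LieModule.lowerCentralSeries ℝ g g 1 := H z hz1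
    have hzbr : ∀ y : g, ⁅z, y⁆ = 0 := fun y => by
      rw [← lie_skew, hcent hz2 y, neg_zero]
    have key : ∀ y : g, J ⁅J z, y⁆ = ⁅J z, J y⁆ := by
      intro y
      have h := hint z y
      rw [hzbr y, hzbr (J y), map_zero, add_zero, zero_sub] at h
      have h' : J ⁅J z, y⁆ - ⁅J z, J y⁆ = 0 := by rw [sub_eq_neg_add]; exact h
      exact sub_eq_zero.mp h'
    by_cases hc : ∀ y : g, ⁅J z, y⁆ = 0
    · -- then all of `lcs 1` would be central, contradicting `lcs 2 ≠ ⊥`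
      have hzJz : LinearIndependent ℝ ![z, J z] := aux_pair_indep J hJJ hz0
      have hsp2 : Module.finrank ℝ (Submodule.span ℝ (Set.range ![z, J z])) = 2 := by
        rw [finrank_span_eq_card hzJz]; simp
      have hsple : Submodule.span ℝ (Set.range ![z, J z])
          ≤ (LieModule.lowerCentralSeries ℝ g g 1 : Submodule ℝ g) := by
        rw [Submodule.span_le]
        rintro w ⟨i, rfl⟩
        fin_cases i
        · exact hz1
        · exact hJz1
      have hspeq : Submodule.span ℝ (Set.range ![z, J z])
          = (LieModule.lowerCentralSeries ℝ g g 1 : Submodule ℝ g) :=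
        Submodule.eq_of_le_of_finrank_le hsple (by rw [hsp2, hdim])
      have hL2bot : LieModule.lowerCentralSeries ℝ g g 2 ≤ ⊥ := by
        rw [e2, LieSubmodule.lie_le_iff]
        intro x _ m hm
        have hm' : m ∈ Submodule.span ℝ (Set.range ![z, J z]) := by rw [hspeq]; exact hm
        have hrange : Set.range ![z, J z] = {z, J z} := by
          ext w; simp [Matrix.range_cons, Matrix.range_empty, or_comm]
        rw [hrange] at hm'
        rcases Submodule.mem_span_pair.mp hm' with ⟨a, b, rfl⟩
        rw [LieSubmodule.mem_bot]
        have hxz : ⁅x, z⁆ = 0 := hcent hz2 x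
        have hxJz : ⁅x, J z⁆ = 0 := by rw [← lie_skew, hc x, neg_zero]
        simp [lie_add, lie_smul, hxz, hxJz]
      exact h3' (le_bot_iff.mp hL2bot)
    · push_neg at hc
      obtain ⟨y, hy⟩ := hc
      obtain ⟨c, hcz⟩ := hmulz (hmem2 hJz1 y)
      have hc0 : c ≠ 0 := by
        intro h
        apply hy
        rw [← lie_skew, hcz, h, zero_smul, neg_zero]
      have hbr : ⁅J z, y⁆ = (-c) • z := by
        rw [← lie_skew, hcz, neg_smul]
      have h2 : ⁅J z, J y⁆ = (-c) • J z := by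
        rw [← key y, hbr, map_smul]
      have hJz2 : J z ∈ LieModule.lowerCentralSeries ℝ g g 2 := by
        have hbm : ⁅J z, J y⁆ ∈ LieModule.lowerCentralSeries ℝ g g 2 := by
          rw [← lie_skew]
          exact (LieModule.lowerCentralSeries ℝ g g 2).neg_mem (hmem2 hJz1 (J y))
        have hm : (-c) • J z ∈ LieModule.lowerCentralSeries ℝ g g 2 := h2 ▸ hbm
        have hne0 : (-c : ℝ) ≠ 0 := neg_ne_zero.mpr hc0
        have h4 : J z = (-c)⁻¹ • ((-c) • J z) := by
          rw [smul_smul, inv_mul_cancel₀ hne0, one_smul]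
        rw [h4]
        exact (LieModule.lowerCentralSeries ℝ g g 2).smul_mem _ hm
      obtain ⟨d, hd⟩ := hmulz hJz2
      exact hnsq d hd
  -- Claim 2: J is abelian
  have claim2 : ∀ x y : g, ⁅x, y⁆ = ⁅J x, J y⁆ := by
    set W : Submodule ℝ g := (LieModule.lowerCentralSeries ℝ g g 1 : Submodule ℝ g)
      ⊓ Submodule.comap J (LieModule.lowerCentralSeries ℝ g g 1 : Submodule ℝ g) with hWdef
    have hWle : W ≤ (LieModule.lowerCentralSeries ℝ g g 1 : Submodule ℝ g) := inf_le_left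
    have hWne : W ≠ (LieModule.lowerCentralSeries ℝ g g 1 : Submodule ℝ g) := by
      intro h
      apply claim1
      intro cc hcc
      have hcw : cc ∈ W := h ▸ hcc
      exact Submodule.mem_comap.mp (Submodule.mem_inf.mp hcw).2
    have hWbot : W = ⊥ := by
      by_contra h
      obtain ⟨v, hv, hv0⟩ := Submodule.exists_mem_ne_zero_of_ne_bot h
      have hv1 : v ∈ (LieModule.lowerCentralSeries ℝ g g 1 : Submodule ℝ g) :=
        (Submodule.mem_inf.mp hv).1
      have hv2 : J v ∈ (LieModule.lowerCentralSeries ℝ g g 1 : Submodule ℝ g) :=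
        Submodule.mem_comap.mp (Submodule.mem_inf.mp hv).2
      have hJv : J v ∈ W := by
        refine Submodule.mem_inf.mpr ⟨hv2, Submodule.mem_comap.mpr ?_⟩
        rw [hJJ v]
        exact Submodule.neg_mem _ hv1
      have hind : LinearIndependent ℝ ![v, J v] := aux_pair_indep J hJJ hv0
      have hsple : Submodule.span ℝ (Set.range ![v, J v]) ≤ W := by
        rw [Submodule.span_le]
        rintro w ⟨i, rfl⟩
        fin_cases i
        · exact hv
        · exact hJv
      have h2le : 2 ≤ Module.finrank ℝ W := by
        have := Submodule.finrank_mono hsple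
        rwa [finrank_span_eq_card hind, Fintype.card_fin] at this
      have hWlt : Module.finrank ℝ W < 2 := by
        rw [← hdim]
        exact Submodule.finrank_lt_finrank_of_lt (lt_of_le_of_ne hWle hWne)
      omega
    intro x y
    have hN1 : ⁅x, y⁆ - ⁅J x, J y⁆ ∈ (LieModule.lowerCentralSeries ℝ g g 1 : Submodule ℝ g) :=
      Submodule.sub_mem _ (hmem1 x y) (hmem1 (J x) (J y))
    have hNJ : J (⁅x, y⁆ - ⁅J x, J y⁆)
        ∈ (LieModule.lowerCentralSeries ℝ g g 1 : Submodule ℝ g) := by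
      have h := hint x y
      have hN : ⁅x, y⁆ - ⁅J x, J y⁆ = J (-(⁅J x, y⁆ + ⁅x, J y⁆)) := by
        rw [map_neg, map_add]
        have : ⁅x, y⁆ - ⁅J x, J y⁆ + (J ⁅J x, y⁆ + J ⁅x, J y⁆) = 0 := by rw [← h]; abel
        have h' := eq_neg_of_add_eq_zero_left this
        rw [h']
      rw [hN, hJJ]
      exact Submodule.neg_mem _ (Submodule.neg_mem _
        (Submodule.add_mem _ (hmem1 (J x) y) (hmem1 x (J y))))
    have hmemW : ⁅x, y⁆ - ⁅J x, J y⁆ ∈ W :=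
      Submodule.mem_inf.mpr ⟨hN1, Submodule.mem_comap.mpr hNJ⟩
    rw [hWbot] at hmemW
    have h0 : ⁅x, y⁆ - ⁅J x, J y⁆ = 0 := hmemW
    exact sub_eq_zero.mp h0
  refine ⟨claim1, claim2, ?_⟩
  -- Claim 3: the ascending central series is J-invariant
  intro i
  induction i with
  | zero =>
    intro x hx
    rw [LieSubmodule.ucs_zero, LieSubmodule.mem_bot] at hx ⊢
    rw [hx, map_zero]
  | succ k _ =>
    intro x hx
    rw [LieSubmodule.ucs_succ, LieSubmodule.mem_normalizer] at hx ⊢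
    intro y
    have h := claim2 (J y) x
    rw [hJJ, neg_lie] at h
    have h' : ⁅y, J x⁆ = -⁅J y, x⁆ := by rw [h, neg_neg]
    rw [h']
    exact ((⊥ : LieSubmodule ℝ g g).ucs k).neg_mem (hx (J y))
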